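/- Let F₁, F₂ be continuous Finsler structures on domains U₁, U₂ ⊆ ℝⁿ containing 0, satisfying bilipschitz bounds (1/C)|v| ≤ Fᵢ(x,v) ≤ C|v|. Let φ : U₁ → U₂ be a distance-preserving bijection for the induced Finsler distances, with φ(0) = 0, and suppose φ is (Fréchet) differentiable at 0. Then the linear map dφ₀ is an isometry between the Minkowski spaces (ℝⁿ, F₁(0,·)) and (ℝⁿ, F₂(0,·)), i.e., F₂(0, dφ₀(v)) = F₁(0, v) for all v ∈ ℝⁿ. -/

import Mathlib

open Set Filter Topology

noncomputable def finslerLength {n : ℕ} (F : EuclideanSpace ℝ (Fin n) → EuclideanSpace ℝ (Fin n) → ℝ)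
    (γ : ℝ → EuclideanSpace ℝ (Fin n)) : ℝ :=
  ∫ t in (0:ℝ)..1, F (γ t) (deriv γ t)

noncomputable def finslerDist {n : ℕ} (U : Set (EuclideanSpace ℝ (Fin n)))
    (F : EuclideanSpace ℝ (Fin n) → EuclideanSpace ℝ (Fin n) → ℝ)
    (p q : EuclideanSpace ℝ (Fin n)) : ℝ :=
  sInf {L | ∃ γ : ℝ → EuclideanSpace ℝ (Fin n), ContDiff ℝ 1 γ ∧
      (∀ t ∈ Icc (0:ℝ) 1, γ t ∈ U) ∧ γ 0 = p ∧ γ 1 = q ∧ finslerLength F γ = L}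

set_option maxHeartbeats 1000000 in
theorem finsler_blowup {n : ℕ} (U : Set (EuclideanSpace ℝ (Fin n))) (hU : IsOpen U)
    (h0 : (0 : EuclideanSpace ℝ (Fin n)) ∈ U)
    (F : EuclideanSpace ℝ (Fin n) → EuclideanSpace ℝ (Fin n) → ℝ)
    (hcont : ContinuousOn (fun p : EuclideanSpace ℝ (Fin n) × EuclideanSpace ℝ (Fin n) =>
      F p.1 p.2) (U ×ˢ univ))
    (hnonneg : ∀ x ∈ U, ∀ v, 0 ≤ F x v)
    (hhom : ∀ x ∈ U, ∀ v, ∀ c : ℝ, 0 ≤ c → F x (c • v) = c * F x v)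
    (hsub : ∀ x ∈ U, ∀ v w, F x (v + w) ≤ F x v + F x w)
    (C : ℝ) (hC : 0 < C)
    (hbd : ∀ x ∈ U, ∀ v, (1 / C) * ‖v‖ ≤ F x v ∧ F x v ≤ C * ‖v‖)
    (u : EuclideanSpace ℝ (Fin n)) (w : ℝ → EuclideanSpace ℝ (Fin n))
    (hw : ∀ᶠ t in 𝓝[>] (0:ℝ), w t ∈ U)
    (hwlim : Tendsto (fun t => t⁻¹ • w t) (𝓝[>] (0:ℝ)) (𝓝 u)) :
    Tendsto (fun t => finslerDist U F 0 (w t) / t) (𝓝[>] (0:ℝ)) (𝓝 (F 0 u)) := by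
  -- basic facts
  have hFx0 : ∀ x ∈ U, F x 0 = 0 := by
    intro x hx
    have := hhom x hx 0 0 le_rfl
    simpa using this
  have hF00 : F 0 0 = 0 := hFx0 0 h0
  have hF0u : 0 ≤ F 0 u := hnonneg 0 h0 u
  -- continuity of F 0 ·
  have hF0cont : Continuous fun v : EuclideanSpace ℝ (Fin n) => F 0 v := by
    rw [← continuousOn_univ]
    exact hcont.comp
      (Continuous.continuousOn (continuous_const.prodMk continuous_id :
        Continuous fun v : EuclideanSpace ℝ (Fin n) => ((0 : EuclideanSpace ℝ (Fin n)), v)))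
      (fun v _ => ⟨h0, mem_univ _⟩)
  -- a closed ball inside U
  obtain ⟨r₀, hr₀, hball⟩ := Metric.isOpen_iff.1 hU 0 h0
  set r : ℝ := r₀ / 2 with hr_def
  have hr : 0 < r := by positivity
  have hUr : ∀ x : EuclideanSpace ℝ (Fin n), ‖x‖ ≤ r → x ∈ U := by
    intro x hx
    apply hball
    rw [Metric.mem_ball, dist_zero_right]
    linarith
  -- Hahn-Banach functional
  obtain ⟨g, hgu, hgle⟩ : ∃ g : EuclideanSpace ℝ (Fin n) →ₗ[ℝ] ℝ,
      g u = F 0 u ∧ ∀ x, g x ≤ F 0 x := by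
    rcases eq_or_ne u 0 with rfl | hu
    · exact ⟨0, by simp [hF00], fun x => hnonneg 0 h0 x⟩
    · have hdom : ∀ x : (LinearPMap.mkSpanSingleton u (F 0 u) hu :
          EuclideanSpace ℝ (Fin n) →ₗ.[ℝ] ℝ).domain,
          (LinearPMap.mkSpanSingleton u (F 0 u) hu) x ≤ F 0 x := by
        rintro ⟨x, hx⟩
        obtain ⟨c, rfl⟩ := Submodule.mem_span_singleton.1 hx
        have happ : (LinearPMap.mkSpanSingleton u (F 0 u) hu) ⟨c • u, hx⟩ = c • F 0 u :=
          LinearPMap.mkSpanSingleton'_apply u (F 0 u) _ c hx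
        rw [happ, smul_eq_mul]
        rcases le_or_gt 0 c with hc | hc
        · rw [hhom 0 h0 u c hc]
        · have h1 : c * F 0 u ≤ 0 := mul_nonpos_of_nonpos_of_nonneg hc.le hF0u
          exact h1.trans (hnonneg 0 h0 _)
      obtain ⟨g, hg1, hg2⟩ := exists_extension_of_le_sublinear
        (LinearPMap.mkSpanSingleton u (F 0 u) hu) (fun v => F 0 v)
        (fun c hc x => hhom 0 h0 x c hc.le) (hsub 0 h0) hdom
      refine ⟨g, ?_, hg2⟩
      have h2 := hg1 ⟨u, Submodule.mem_span_singleton_self u⟩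
      rwa [LinearPMap.mkSpanSingleton_apply] at h2
  set fc : EuclideanSpace ℝ (Fin n) →L[ℝ] ℝ := LinearMap.toContinuousLinearMap g with hfc_def
  have hfc_apply : ∀ x, fc x = g x := fun x => by
    rw [hfc_def, LinearMap.coe_toContinuousLinearMap']
  -- uniform comparison near 0
  have hnear : ∀ ε > 0, ∃ δ > 0, δ ≤ r ∧
      ∀ x : EuclideanSpace ℝ (Fin n), ‖x‖ ≤ δ → ∀ v, |F x v - F 0 v| ≤ ε * ‖v‖ := by
    intro ε hε
    set K : Set (EuclideanSpace ℝ (Fin n) × EuclideanSpace ℝ (Fin n)) :=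
      (Metric.closedBall 0 r) ×ˢ (Metric.sphere 0 1) with hK_def
    have hKc : IsCompact K := (isCompact_closedBall _ _).prod (isCompact_sphere _ _)
    have hKsub : K ⊆ U ×ˢ univ := by
      rintro ⟨x, v⟩ ⟨hx, -⟩
      exact ⟨hUr x (by simpa [dist_zero_right] using Metric.mem_closedBall.1 hx), mem_univ _⟩
    have hHc : ContinuousOn (fun p : EuclideanSpace ℝ (Fin n) × EuclideanSpace ℝ (Fin n) =>
        F p.1 p.2 - F 0 p.2) K :=
      (hcont.mono hKsub).sub ((hF0cont.comp continuous_snd).continuousOn)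
    have hunif := hKc.uniformContinuousOn_of_continuous hHc
    rw [Metric.uniformContinuousOn_iff] at hunif
    obtain ⟨δ, hδpos, hδ⟩ := hunif ε hε
    refine ⟨min (δ / 2) r, by positivity, min_le_right _ _, fun x hx v => ?_⟩
    have hxr : ‖x‖ ≤ r := hx.trans (min_le_right _ _)
    have hxU : x ∈ U := hUr x hxr
    rcases eq_or_ne v 0 with rfl | hv
    · simp [hFx0 x hxU, hF00]
    · set vh : EuclideanSpace ℝ (Fin n) := ‖v‖⁻¹ • v with hvh_def
      have hvn : ‖v‖ ≠ 0 := norm_ne_zero_iff.2 hv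
      have hvh_sphere : vh ∈ Metric.sphere (0 : EuclideanSpace ℝ (Fin n)) 1 := by
        simp [hvh_def, norm_smul, abs_of_nonneg (inv_nonneg.2 (norm_nonneg v)),
          inv_mul_cancel₀ hvn]
      have hm1 : (x, vh) ∈ K := by
        exact ⟨Metric.mem_closedBall.2 (by simpa [dist_zero_right] using hxr), hvh_sphere⟩
      have hm2 : ((0 : EuclideanSpace ℝ (Fin n)), vh) ∈ K := by
        exact ⟨Metric.mem_closedBall.2 (by simp [hr.le]), hvh_sphere⟩
      have hdist : dist (x, vh) ((0 : EuclideanSpace ℝ (Fin n)), vh) < δ := by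
        rw [Prod.dist_eq]
        simp only [dist_self, dist_zero_right]
        have : ‖x‖ < δ := lt_of_le_of_lt (hx.trans (min_le_left _ _)) (by linarith)
        simpa [max_eq_left (norm_nonneg x)] using this
      have hcomp := hδ _ hm1 _ hm2 hdist
      simp only [Real.dist_eq, sub_self, sub_zero] at hcomp
      have hkey : |F x vh - F 0 vh| < ε := by
        simpa using hcomp
      have hs : ‖v‖ • vh = v := by
        rw [hvh_def, smul_smul, mul_inv_cancel₀ hvn, one_smul]
      have hx_eq : F x v = ‖v‖ * F x vh := by
        rw [← hs, hhom x hxU vh ‖v‖ (norm_nonneg v), hs]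
      have h0_eq : F 0 v = ‖v‖ * F 0 vh := by
        rw [← hs, hhom 0 h0 vh ‖v‖ (norm_nonneg v), hs]
      rw [hx_eq, h0_eq, ← mul_sub, abs_mul, abs_of_nonneg (norm_nonneg v), mul_comm (ε) ‖v‖]
      exact mul_le_mul_of_nonneg_left hkey.le (norm_nonneg v)
  -- lower bound for all path lengths (membership in the sInf set implies nonneg)
  have hS0 : ∀ p : EuclideanSpace ℝ (Fin n), ∀ l ∈ {L | ∃ γ : ℝ → EuclideanSpace ℝ (Fin n),
      ContDiff ℝ 1 γ ∧ (∀ s ∈ Icc (0:ℝ) 1, γ s ∈ U) ∧ γ 0 = 0 ∧ γ 1 = p ∧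
      finslerLength F γ = L}, (0:ℝ) ≤ l := by
    rintro p l ⟨γ, hγ, hγU, hγ0, hγ1, rfl⟩
    apply intervalIntegral.integral_nonneg zero_le_one
    intro s hs
    exact hnonneg _ (hγU s hs) _
  -- straight path membership
  have hstraight : ∀ p : EuclideanSpace ℝ (Fin n), (∀ s ∈ Icc (0:ℝ) 1, s • p ∈ U) →
      (∫ s in (0:ℝ)..1, F (s • p) p) ∈ {L | ∃ γ : ℝ → EuclideanSpace ℝ (Fin n),
        ContDiff ℝ 1 γ ∧ (∀ s ∈ Icc (0:ℝ) 1, γ s ∈ U) ∧ γ 0 = 0 ∧ γ 1 = p ∧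
        finslerLength F γ = L} := by
    intro p hseg
    have hd : ∀ s : ℝ, HasDerivAt (fun s : ℝ => s • p) p s := by
      intro s
      simpa using (hasDerivAt_id s).smul_const p
    refine ⟨fun s => s • p, contDiff_id.smul contDiff_const, hseg, by simp, by simp, ?_⟩
    exact intervalIntegral.integral_congr fun s _ => by rw [(hd s).deriv]
  -- w t → 0
  have hwt0 : Tendsto w (𝓝[>] (0:ℝ)) (𝓝 0) := by
    have h1 : Tendsto (fun t : ℝ => t • (t⁻¹ • w t)) (𝓝[>] (0:ℝ))
        (𝓝 ((0:ℝ) • u)) :=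
      (tendsto_id.mono_left nhdsWithin_le_nhds).smul hwlim
    rw [zero_smul] at h1
    apply h1.congr'
    filter_upwards [self_mem_nhdsWithin] with t ht
    rw [smul_smul, mul_inv_cancel₀ (ne_of_gt ht), one_smul]
  rw [Metric.tendsto_nhds]
  intro ε' hε'
  obtain ⟨M, hM, hMge⟩ : ∃ M : ℝ, 0 < M ∧ C * (F 0 u + 1) ≤ M :=
    ⟨C * (F 0 u + 1) + 1, by nlinarith, by linarith⟩
  have hden : (0:ℝ) < M + ‖u‖ + 1 := by nlinarith [norm_nonneg u]
  obtain ⟨ε, hεpos, hεM⟩ : ∃ ε : ℝ, 0 < ε ∧ ε * (M + ‖u‖ + 1) = ε' / 2 :=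
    ⟨ε' / (2 * (M + ‖u‖ + 1)), div_pos hε' (by linarith), by
      field_simp⟩
  obtain ⟨δ, hδpos, hδr, hδ⟩ := hnear ε hεpos
  -- eventual facts
  have E2 : ∀ᶠ t in 𝓝[>] (0:ℝ), ‖w t‖ ≤ δ := by
    have := Metric.tendsto_nhds.1 hwt0 δ hδpos
    filter_upwards [this] with t ht
    rw [dist_zero_right] at ht; exact ht.le
  have E3 : ∀ᶠ t in 𝓝[>] (0:ℝ),
      F 0 (t⁻¹ • w t) + ε * ‖t⁻¹ • w t‖ < F 0 u + ε' := by
    have hlim : Tendsto (fun t : ℝ => F 0 (t⁻¹ • w t) + ε * ‖t⁻¹ • w t‖)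
        (𝓝[>] (0:ℝ)) (𝓝 (F 0 u + ε * ‖u‖)) :=
      ((hF0cont.tendsto u).comp hwlim).add
        ((((continuous_norm.tendsto u).comp hwlim)).const_mul ε)
    have h1 : ε * ‖u‖ ≤ ε' / 2 := by
      rw [← hεM]
      exact mul_le_mul_of_nonneg_left (by linarith) hεpos.le
    exact hlim.eventually_lt_const (by linarith)
  have E4 : ∀ᶠ t in 𝓝[>] (0:ℝ),
      F 0 u - ε' < fc (t⁻¹ • w t) - ε * M := by
    have hlim : Tendsto (fun t : ℝ => fc (t⁻¹ • w t) - ε * M) (𝓝[>] (0:ℝ))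
        (𝓝 (fc u - ε * M)) :=
      ((fc.continuous.tendsto u).comp hwlim).sub tendsto_const_nhds
    have h1 : ε * M ≤ ε' / 2 := by
      rw [← hεM]
      exact mul_le_mul_of_nonneg_left (by linarith [norm_nonneg u]) hεpos.le
    apply hlim.eventually_const_lt
    rw [hfc_apply, hgu]
    linarith
  have E6 : ∀ᶠ t in 𝓝[>] (0:ℝ), C * (F 0 u + 1) * t ≤ δ := by
    have hlim : Tendsto (fun t : ℝ => C * (F 0 u + 1) * t) (𝓝[>] (0:ℝ)) (𝓝 0) := by
      have := (tendsto_id.mono_left (nhdsWithin_le_nhds :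
        𝓝[>] (0:ℝ) ≤ 𝓝 0)).const_mul (C * (F 0 u + 1))
      simpa using this
    filter_upwards [hlim.eventually_lt_const hδpos] with t ht using ht.le
  filter_upwards [hw, E2, E3, E4, E6, self_mem_nhdsWithin] with t hwU h2 h3 h4 h6 ht
  have ht0 : (0:ℝ) < t := ht
  set d : ℝ := finslerDist U F 0 (w t) with hd_def
  -- segment inside U
  have hseg : ∀ s ∈ Icc (0:ℝ) 1, s • w t ∈ U := by
    intro s hs
    apply hUr
    rw [norm_smul, Real.norm_eq_abs, abs_of_nonneg hs.1]
    calc s * ‖w t‖ ≤ 1 * ‖w t‖ := by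
          exact mul_le_mul_of_nonneg_right hs.2 (norm_nonneg _)
      _ ≤ δ := by rw [one_mul]; exact h2
      _ ≤ r := hδr
  have hmem := hstraight (w t) hseg
  have hbdd : BddBelow {L | ∃ γ : ℝ → EuclideanSpace ℝ (Fin n), ContDiff ℝ 1 γ ∧
      (∀ s ∈ Icc (0:ℝ) 1, γ s ∈ U) ∧ γ 0 = 0 ∧ γ 1 = w t ∧ finslerLength F γ = L} :=
    ⟨0, fun l hl => hS0 (w t) l hl⟩
  -- upper bound
  have hupper : d < (F 0 u + ε') * t := by
    have hd_le : d ≤ ∫ s in (0:ℝ)..1, F (s • w t) (w t) := csInf_le hbdd hmem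
    have hIseg : IntervalIntegrable (fun s => F (s • w t) (w t)) MeasureTheory.volume 0 1 := by
      apply ContinuousOn.intervalIntegrable
      have hgc : ContinuousOn (fun s : ℝ => (s • w t, w t)) (uIcc (0:ℝ) 1) :=
        ((continuous_id.smul continuous_const).prodMk continuous_const).continuousOn
      have hmaps : MapsTo (fun s : ℝ => (s • w t, w t)) (uIcc (0:ℝ) 1) (U ×ˢ univ) := by
        intro s hs
        rw [uIcc_of_le zero_le_one] at hs
        exact ⟨hseg s hs, mem_univ _⟩
      exact hcont.comp hgc hmaps
    have hptw : ∀ s ∈ Icc (0:ℝ) 1,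
        F (s • w t) (w t) ≤ t * (F 0 (t⁻¹ • w t) + ε * ‖t⁻¹ • w t‖) := by
      intro s hs
      have hx : ‖s • w t‖ ≤ δ := by
        rw [norm_smul, Real.norm_eq_abs, abs_of_nonneg hs.1]
        calc s * ‖w t‖ ≤ 1 * ‖w t‖ := mul_le_mul_of_nonneg_right hs.2 (norm_nonneg _)
          _ ≤ δ := by rw [one_mul]; exact h2
      have hrw : t • (t⁻¹ • w t) = w t := by
        rw [smul_smul, mul_inv_cancel₀ (ne_of_gt ht0), one_smul]
      have h1 : F (s • w t) (w t) = t * F (s • w t) (t⁻¹ • w t) := by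
        have h2' := hhom _ (hseg s hs) (t⁻¹ • w t) t ht0.le
        rwa [hrw] at h2'
      rw [h1]
      apply mul_le_mul_of_nonneg_left _ ht0.le
      have hab := (abs_le.1 (hδ _ hx (t⁻¹ • w t))).2
      linarith
    have hint_le : (∫ s in (0:ℝ)..1, F (s • w t) (w t)) ≤
        t * (F 0 (t⁻¹ • w t) + ε * ‖t⁻¹ • w t‖) := by
      have := intervalIntegral.integral_mono_on zero_le_one hIseg
        intervalIntegrable_const hptw
      simpa using this
    calc d ≤ _ := hd_le
      _ ≤ t * (F 0 (t⁻¹ • w t) + ε * ‖t⁻¹ • w t‖) := hint_le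
      _ < t * (F 0 u + ε') := mul_lt_mul_of_pos_left h3 ht0
      _ = (F 0 u + ε') * t := mul_comm _ _
  -- lower bound
  have hlower : (F 0 u - ε') * t < d := by
    have hmin : F 0 u - ε' < min (F 0 u + 1) (fc (t⁻¹ • w t) - ε * M) :=
      lt_min (by linarith) h4
    have hkey : ∀ l ∈ {L | ∃ γ : ℝ → EuclideanSpace ℝ (Fin n), ContDiff ℝ 1 γ ∧
        (∀ s ∈ Icc (0:ℝ) 1, γ s ∈ U) ∧ γ 0 = 0 ∧ γ 1 = w t ∧ finslerLength F γ = L},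
        t * min (F 0 u + 1) (fc (t⁻¹ • w t) - ε * M) ≤ l := by
      rintro l ⟨γ, hγ, hγU, hγ0, hγ1, rfl⟩
      have hDc : Continuous (deriv γ) := hγ.continuous_deriv le_rfl
      have hγc : Continuous γ := hγ.continuous
      have hFγint : IntervalIntegrable (fun s => F (γ s) (deriv γ s))
          MeasureTheory.volume 0 1 := by
        apply ContinuousOn.intervalIntegrable
        have hgc : ContinuousOn (fun s : ℝ => (γ s, deriv γ s)) (uIcc (0:ℝ) 1) :=
          (hγc.prodMk hDc).continuousOn
        have hmaps : MapsTo (fun s : ℝ => (γ s, deriv γ s)) (uIcc (0:ℝ) 1) (U ×ˢ univ) := by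
          intro s hs
          rw [uIcc_of_le zero_le_one] at hs
          exact ⟨hγU s hs, mem_univ _⟩
        exact hcont.comp hgc hmaps
      have hNint : IntervalIntegrable (fun s => ‖deriv γ s‖) MeasureTheory.volume 0 1 :=
        (hDc.norm).intervalIntegrable _ _
      have hDint : IntervalIntegrable (deriv γ) MeasureTheory.volume 0 1 :=
        hDc.intervalIntegrable _ _
      have hlen : finslerLength F γ = ∫ s in (0:ℝ)..1, F (γ s) (deriv γ s) := rfl
      by_cases hcase : t * (F 0 u + 1) ≤ finslerLength F γ
      · exact le_trans (mul_le_mul_of_nonneg_left (min_le_left _ _) ht0.le) hcase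
      · push_neg at hcase
        have harc : (∫ s in (0:ℝ)..1, ‖deriv γ s‖) ≤ C * finslerLength F γ := by
          have hp : ∀ s ∈ Icc (0:ℝ) 1, (1/C) * ‖deriv γ s‖ ≤ F (γ s) (deriv γ s) :=
            fun s hs => (hbd _ (hγU s hs) _).1
          have h1 := intervalIntegral.integral_mono_on zero_le_one
            ((continuous_const.mul (hDc.norm)).intervalIntegrable _ _) hFγint hp
          simp only [Pi.mul_apply] at h1
          rw [intervalIntegral.integral_const_mul] at h1
          rw [hlen]
          calc (∫ s in (0:ℝ)..1, ‖deriv γ s‖)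
              = C * ((1/C) * ∫ s in (0:ℝ)..1, ‖deriv γ s‖) := by
                field_simp
            _ ≤ C * ∫ s in (0:ℝ)..1, F (γ s) (deriv γ s) :=
                mul_le_mul_of_nonneg_left h1 hC.le
        have harcM : (∫ s in (0:ℝ)..1, ‖deriv γ s‖) ≤ C * (F 0 u + 1) * t := by
          calc (∫ s in (0:ℝ)..1, ‖deriv γ s‖) ≤ C * finslerLength F γ := harc
            _ ≤ C * (t * (F 0 u + 1)) := mul_le_mul_of_nonneg_left hcase.le hC.le
            _ = C * (F 0 u + 1) * t := by ring
        have hFTC : ∀ s ∈ Icc (0:ℝ) 1, γ s = ∫ x in (0:ℝ)..s, deriv γ x := by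
          intro s hs
          have h1 := intervalIntegral.integral_deriv_eq_sub (f := γ) (a := 0) (b := s)
            (fun x _ => (hγ.differentiable one_ne_zero).differentiableAt)
            (hDc.intervalIntegrable _ _)
          rw [hγ0, sub_zero] at h1
          exact h1.symm
        have hconf : ∀ s ∈ Icc (0:ℝ) 1, ‖γ s‖ ≤ δ := by
          intro s hs
          rw [hFTC s hs]
          calc ‖∫ x in (0:ℝ)..s, deriv γ x‖ ≤ ∫ x in (0:ℝ)..s, ‖deriv γ x‖ :=
                intervalIntegral.norm_integral_le_integral_norm hs.1
            _ ≤ ∫ x in (0:ℝ)..1, ‖deriv γ x‖ :=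
                intervalIntegral.integral_mono_interval le_rfl hs.1 hs.2
                  (MeasureTheory.ae_of_all _ (fun x => norm_nonneg _)) hNint
            _ ≤ C * (F 0 u + 1) * t := harcM
            _ ≤ δ := h6
        have hptw : ∀ s ∈ Icc (0:ℝ) 1,
            fc (deriv γ s) - ε * ‖deriv γ s‖ ≤ F (γ s) (deriv γ s) := by
          intro s hs
          have h1 := (abs_le.1 (hδ (γ s) (hconf s hs) (deriv γ s))).1
          have h3' := hgle (deriv γ s)
          rw [hfc_apply]
          linarith
        have hIfc1 : IntervalIntegrable (fun s => fc (deriv γ s))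
            MeasureTheory.volume 0 1 := (fc.continuous.comp hDc).intervalIntegrable _ _
        have hIfc2 : IntervalIntegrable (fun s => ε * ‖deriv γ s‖)
            MeasureTheory.volume 0 1 :=
          (continuous_const.mul (hDc.norm)).intervalIntegrable _ _
        have hIfc : IntervalIntegrable (fun s => fc (deriv γ s) - ε * ‖deriv γ s‖)
            MeasureTheory.volume 0 1 := hIfc1.sub hIfc2
        have hmono := intervalIntegral.integral_mono_on zero_le_one hIfc hFγint hptw
        have hsplit : (∫ s in (0:ℝ)..1, (fc (deriv γ s) - ε * ‖deriv γ s‖)) =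
            fc (w t) - ε * ∫ s in (0:ℝ)..1, ‖deriv γ s‖ := by
          rw [intervalIntegral.integral_sub hIfc1 hIfc2,
            intervalIntegral.integral_const_mul,
            fc.intervalIntegral_comp_comm hDint]
          congr 2
          have h1 := hFTC 1 ⟨zero_le_one, le_rfl⟩
          rw [← h1, hγ1]
        have hl1 : fc (w t) - ε * (∫ s in (0:ℝ)..1, ‖deriv γ s‖) ≤ finslerLength F γ := by
          rw [hlen, ← hsplit]
          exact hmono
        have hl2 : ε * (∫ s in (0:ℝ)..1, ‖deriv γ s‖) ≤ ε * (M * t) := by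
          apply mul_le_mul_of_nonneg_left _ hεpos.le
          calc (∫ s in (0:ℝ)..1, ‖deriv γ s‖) ≤ C * (F 0 u + 1) * t := harcM
            _ ≤ M * t := mul_le_mul_of_nonneg_right hMge ht0.le
        have hfcsmul : fc (t⁻¹ • w t) = t⁻¹ * fc (w t) := by
          rw [map_smul, smul_eq_mul]
        calc t * min (F 0 u + 1) (fc (t⁻¹ • w t) - ε * M)
            ≤ t * (fc (t⁻¹ • w t) - ε * M) :=
              mul_le_mul_of_nonneg_left (min_le_right _ _) ht0.le
          _ = fc (w t) - ε * (M * t) := by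
              rw [hfcsmul, mul_sub, ← mul_assoc, mul_inv_cancel₀ (ne_of_gt ht0), one_mul]
              ring
          _ ≤ finslerLength F γ := by linarith
    have hd_ge : t * min (F 0 u + 1) (fc (t⁻¹ • w t) - ε * M) ≤ d :=
      le_csInf ⟨_, hmem⟩ hkey
    calc (F 0 u - ε') * t = t * (F 0 u - ε') := mul_comm _ _
      _ < t * min (F 0 u + 1) (fc (t⁻¹ • w t) - ε * M) := mul_lt_mul_of_pos_left hmin ht0
      _ ≤ d := hd_ge
  rw [Real.dist_eq, abs_sub_lt_iff]
  have hu1 : d / t < F 0 u + ε' := by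
    rw [div_lt_iff₀ ht0]; exact hupper
  have hu2 : F 0 u - ε' < d / t := by
    rw [lt_div_iff₀ ht0]; exact hlower
  constructor <;> linarith

theorem stmt7' {n : ℕ} (U₁ U₂ : Set (EuclideanSpace ℝ (Fin n)))
    (hU₁ : IsOpen U₁) (hU₂ : IsOpen U₂) (h0₁ : (0 : EuclideanSpace ℝ (Fin n)) ∈ U₁)
    (h0₂ : (0 : EuclideanSpace ℝ (Fin n)) ∈ U₂)
    (F₁ F₂ : EuclideanSpace ℝ (Fin n) → EuclideanSpace ℝ (Fin n) → ℝ)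
    (hcont₁ : ContinuousOn (fun p : EuclideanSpace ℝ (Fin n) × EuclideanSpace ℝ (Fin n) =>
      F₁ p.1 p.2) (U₁ ×ˢ univ))
    (hcont₂ : ContinuousOn (fun p : EuclideanSpace ℝ (Fin n) × EuclideanSpace ℝ (Fin n) =>
      F₂ p.1 p.2) (U₂ ×ˢ univ))
    (hnonneg₁ : ∀ x ∈ U₁, ∀ v, 0 ≤ F₁ x v) (hnonneg₂ : ∀ x ∈ U₂, ∀ v, 0 ≤ F₂ x v)
    (hhom₁ : ∀ x ∈ U₁, ∀ v, ∀ c : ℝ, 0 ≤ c → F₁ x (c • v) = c * F₁ x v)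
    (hhom₂ : ∀ x ∈ U₂, ∀ v, ∀ c : ℝ, 0 ≤ c → F₂ x (c • v) = c * F₂ x v)
    (hsub₁ : ∀ x ∈ U₁, ∀ v w, F₁ x (v + w) ≤ F₁ x v + F₁ x w)
    (hsub₂ : ∀ x ∈ U₂, ∀ v w, F₂ x (v + w) ≤ F₂ x v + F₂ x w)
    (C : ℝ) (hC : 0 < C)
    (hbd₁ : ∀ x ∈ U₁, ∀ v, (1 / C) * ‖v‖ ≤ F₁ x v ∧ F₁ x v ≤ C * ‖v‖)
    (hbd₂ : ∀ x ∈ U₂, ∀ v, (1 / C) * ‖v‖ ≤ F₂ x v ∧ F₂ x v ≤ C * ‖v‖)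
    (φ : EuclideanSpace ℝ (Fin n) → EuclideanSpace ℝ (Fin n))
    (hbij : Set.BijOn φ U₁ U₂) (hφ0 : φ 0 = 0)
    (hiso : ∀ x ∈ U₁, ∀ y ∈ U₁, finslerDist U₂ F₂ (φ x) (φ y) = finslerDist U₁ F₁ x y)
    (L : EuclideanSpace ℝ (Fin n) →L[ℝ] EuclideanSpace ℝ (Fin n))
    (hdiff : HasFDerivAt φ L 0) :
    ∀ v : EuclideanSpace ℝ (Fin n), F₂ 0 (L v) = F₁ 0 v := by
  intro v
  have htv : ∀ᶠ t in 𝓝[>] (0:ℝ), t • v ∈ U₁ := by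
    have hc : Tendsto (fun t : ℝ => t • v) (𝓝[>] (0:ℝ)) (𝓝 0) := by
      have h1 : Tendsto (fun t : ℝ => t • v) (𝓝 (0:ℝ)) (𝓝 ((0:ℝ) • v)) :=
        (continuous_id.smul continuous_const).tendsto 0
      rw [zero_smul] at h1
      exact h1.mono_left nhdsWithin_le_nhds
    exact hc.eventually (hU₁.eventually_mem h0₁)
  have hw₂ : ∀ᶠ t in 𝓝[>] (0:ℝ), φ (t • v) ∈ U₂ :=
    htv.mono fun t ht => hbij.mapsTo ht
  have hwlim₁ : Tendsto (fun t : ℝ => t⁻¹ • (t • v)) (𝓝[>] (0:ℝ)) (𝓝 v) := by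
    apply Tendsto.congr' _ tendsto_const_nhds
    filter_upwards [self_mem_nhdsWithin] with t ht
    rw [smul_smul, inv_mul_cancel₀ (ne_of_gt ht), one_smul]
  have T1 := finsler_blowup U₁ hU₁ h0₁ F₁ hcont₁ hnonneg₁ hhom₁ hsub₁ C hC hbd₁ v
    (fun t => t • v) htv hwlim₁
  have hder : HasDerivAt (fun t : ℝ => φ (t • v)) (L v) 0 := by
    have hg : HasDerivAt (fun t : ℝ => t • v) v 0 := by
      simpa using (hasDerivAt_id (0:ℝ)).smul_const v
    have h0' : ((0:ℝ) • v : EuclideanSpace ℝ (Fin n)) = 0 := zero_smul _ _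
    have hl : HasFDerivAt φ L ((fun t : ℝ => t • v) 0) := by
      simpa [h0'] using hdiff
    exact hl.comp_hasDerivAt 0 hg
  have hwlim₂ : Tendsto (fun t : ℝ => t⁻¹ • φ (t • v)) (𝓝[>] (0:ℝ)) (𝓝 (L v)) := by
    have h1 := hasDerivAt_iff_tendsto_slope.1 hder
    have h2 : Tendsto (slope (fun t : ℝ => φ (t • v)) 0) (𝓝[>] (0:ℝ)) (𝓝 (L v)) :=
      h1.mono_left (nhdsWithin_mono 0 fun x hx => ne_of_gt hx)
    apply Tendsto.congr' _ h2
    filter_upwards [self_mem_nhdsWithin] with t ht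
    rw [slope_def_module]
    simp [hφ0]
  have T2 := finsler_blowup U₂ hU₂ h0₂ F₂ hcont₂ hnonneg₂ hhom₂ hsub₂ C hC hbd₂ (L v)
    (fun t => φ (t • v)) hw₂ hwlim₂
  have heq : (fun t : ℝ => finslerDist U₂ F₂ 0 (φ (t • v)) / t) =ᶠ[𝓝[>] (0:ℝ)]
      fun t : ℝ => finslerDist U₁ F₁ 0 (t • v) / t := by
    filter_upwards [htv] with t ht
    have h1 := hiso 0 h0₁ (t • v) ht
    rw [hφ0] at h1
    rw [h1]
  exact tendsto_nhds_unique (T2.congr' heq) T1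


/-- Blow-up at a point of differentiability: the differential at `0` of a
distance-preserving bijection between Finsler domains is a linear isometry between
the Minkowski spaces `(ℝⁿ, F₁(0,·))` and `(ℝⁿ, F₂(0,·))`. -/
theorem stmt7 {n : ℕ} (U₁ U₂ : Set (EuclideanSpace ℝ (Fin n)))
    (hU₁ : IsOpen U₁) (hU₂ : IsOpen U₂) (h0₁ : (0 : EuclideanSpace ℝ (Fin n)) ∈ U₁)
    (h0₂ : (0 : EuclideanSpace ℝ (Fin n)) ∈ U₂)
    (F₁ F₂ : EuclideanSpace ℝ (Fin n) → EuclideanSpace ℝ (Fin n) → ℝ)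
    (hcont₁ : ContinuousOn (fun p : EuclideanSpace ℝ (Fin n) × EuclideanSpace ℝ (Fin n) =>
      F₁ p.1 p.2) (U₁ ×ˢ univ))
    (hcont₂ : ContinuousOn (fun p : EuclideanSpace ℝ (Fin n) × EuclideanSpace ℝ (Fin n) =>
      F₂ p.1 p.2) (U₂ ×ˢ univ))
    (hnonneg₁ : ∀ x ∈ U₁, ∀ v, 0 ≤ F₁ x v) (hnonneg₂ : ∀ x ∈ U₂, ∀ v, 0 ≤ F₂ x v)
    (hhom₁ : ∀ x ∈ U₁, ∀ v, ∀ c : ℝ, 0 ≤ c → F₁ x (c • v) = c * F₁ x v)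
    (hhom₂ : ∀ x ∈ U₂, ∀ v, ∀ c : ℝ, 0 ≤ c → F₂ x (c • v) = c * F₂ x v)
    (hsub₁ : ∀ x ∈ U₁, ∀ v w, F₁ x (v + w) ≤ F₁ x v + F₁ x w)
    (hsub₂ : ∀ x ∈ U₂, ∀ v w, F₂ x (v + w) ≤ F₂ x v + F₂ x w)
    (hpos₁ : ∀ x ∈ U₁, ∀ v, F₁ x v = 0 → v = 0)
    (hpos₂ : ∀ x ∈ U₂, ∀ v, F₂ x v = 0 → v = 0)
    (C : ℝ) (hC : 0 < C)
    (hbd₁ : ∀ x ∈ U₁, ∀ v, (1 / C) * ‖v‖ ≤ F₁ x v ∧ F₁ x v ≤ C * ‖v‖)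
    (hbd₂ : ∀ x ∈ U₂, ∀ v, (1 / C) * ‖v‖ ≤ F₂ x v ∧ F₂ x v ≤ C * ‖v‖)
    (φ : EuclideanSpace ℝ (Fin n) → EuclideanSpace ℝ (Fin n))
    (hbij : Set.BijOn φ U₁ U₂) (hφ0 : φ 0 = 0)
    (hiso : ∀ x ∈ U₁, ∀ y ∈ U₁, finslerDist U₂ F₂ (φ x) (φ y) = finslerDist U₁ F₁ x y)
    (L : EuclideanSpace ℝ (Fin n) →L[ℝ] EuclideanSpace ℝ (Fin n))
    (hdiff : HasFDerivAt φ L 0) :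
    ∀ v : EuclideanSpace ℝ (Fin n), F₂ 0 (L v) = F₁ 0 v := by
  exact stmt7' U₁ U₂ hU₁ hU₂ h0₁ h0₂ F₁ F₂ hcont₁ hcont₂ hnonneg₁ hnonneg₂ hhom₁ hhom₂ hsub₁ hsub₂ C hC hbd₁ hbd₂ φ hbij hφ0 hiso L hdiff
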